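/- Let n ≥ 2 be an integer and let w : (0,∞) → ℝ be measurable with I₀ := ∫₀^∞ s^{n−2} |w(s)| ds < ∞. Then for every ε > 0 and every x ∈ ℝⁿ with x ≠ 0, one has ∫_ε^∞ [ c_{1,n} (|x|/t)^{2−n} ∫₀^{|x|/t} s^{n−2} |w(s)| ((|x|/t)² − s²)^{−1/2} ds ] t^{−(n+1)} dt ≤ c_{1,n} I₀ · ε^{−1} |x|^{1−n}. -/

import Mathlib

open MeasureTheory

/-- `sphereVol m` is the surface area `σ_{m-1} = 2 π^{m/2} / Γ(m/2)` of the unit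
sphere in `ℝ^m`. -/
noncomputable def sphereVol (m : ℕ) : ℝ := 2 * Real.pi ^ ((m : ℝ) / 2) / Real.Gamma ((m : ℝ) / 2)

/-- The constant `c_{1,n} = σ_0 σ_{n-2} / σ_{n-1}` (with `σ_0 = 2`). -/
noncomputable def radonConst (k n : ℕ) : ℝ := sphereVol k * sphereVol (n - k) / sphereVol n

open Set
open scoped ENNReal


lemma sphereVol_nonneg (m : ℕ) : 0 ≤ sphereVol m := by
  unfold sphereVol
  apply div_nonneg (by positivity)
  exact Real.Gamma_nonneg_of_nonneg (by positivity)

lemma radonConst_nonneg (k n : ℕ) : 0 ≤ radonConst k n :=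
  div_nonneg (mul_nonneg (sphereVol_nonneg _) (sphereVol_nonneg _)) (sphereVol_nonneg _)

lemma aux_deriv (A s : ℝ) (hA : 0 < A) (hs : 0 < s) {t : ℝ} (ht : 0 < t) (htb : t < A / s) :
    HasDerivAt (fun t : ℝ => -(A^2)⁻¹ * Real.sqrt ((A/t)^2 - s^2))
      ((t^3)⁻¹ * ((A/t)^2 - s^2) ^ (-(1/2) : ℝ)) t := by
  have ht' : t ≠ 0 := ht.ne'
  have hu : 0 < (A/t)^2 - s^2 := by
    have h1 : s < A / t := by
      rw [lt_div_iff₀ ht]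
      nlinarith [(lt_div_iff₀ hs).mp htb]
    have h2 : 0 < A / t := div_pos hA ht
    nlinarith
  have hu' : HasDerivAt (fun t : ℝ => (A/t)^2 - s^2) (2 * (A/t)^1 * (A * -(t^2)⁻¹)) t := by
    have h1 : HasDerivAt (fun t : ℝ => A / t) (A * -(t^2)⁻¹) t := by
      simpa [div_eq_mul_inv] using (hasDerivAt_inv ht').const_mul A
    exact ((h1.pow 2).sub_const (s^2))
  have hsq : HasDerivAt (fun t : ℝ => Real.sqrt ((A/t)^2 - s^2))
      ((Real.sqrt ((A/t)^2 - s^2))⁻¹ / 2 * (2 * (A/t)^1 * (A * -(t^2)⁻¹))) t := by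
    have := (Real.hasDerivAt_sqrt hu.ne').comp t hu'
    refine this.congr_deriv ?_
    ring
  have := hsq.const_mul (-(A^2)⁻¹)
  refine this.congr_deriv ?_
  symm
  have hsqrt_pos : 0 < Real.sqrt ((A/t)^2 - s^2) := Real.sqrt_pos.mpr hu
  rw [Real.rpow_neg hu.le, ← Real.sqrt_eq_rpow]
  field_simp [hsqrt_pos.ne']

lemma aux_tint (A s ε : ℝ) (hA : 0 < A) (hs : 0 < s) (hε : 0 < ε) :
    (∫⁻ t in Set.Ioo ε (A/s),
        ENNReal.ofReal ((t^3)⁻¹ * ((A/t)^2 - s^2) ^ (-(1/2) : ℝ)))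
      ≤ ENNReal.ofReal ((A * ε)⁻¹) := by
  by_cases hb : ε < A / s
  · set b := A / s with hbdef
    have hb0 : 0 < b := hε.trans hb
    have hA' : A = s * b := by rw [hbdef]; field_simp
    set g : ℝ → ℝ := fun t => (t^3)⁻¹ * ((A/t)^2 - s^2) ^ (-(1/2) : ℝ) with hg
    have hgnn : ∀ t ∈ Set.Ioo ε b, 0 ≤ g t := by
      intro t ht
      have ht0 : 0 < t := hε.trans ht.1
      have : (0:ℝ) ≤ ((A/t)^2 - s^2) ^ (-(1/2) : ℝ) := by
        have hu : 0 < (A/t)^2 - s^2 := by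
          have h1 : s < A / t := by
            rw [lt_div_iff₀ ht0]
            nlinarith [(lt_div_iff₀ hs).mp ht.2]
          have h2 : 0 < A / t := div_pos hA ht0
          nlinarith
        positivity
      positivity
    -- pointwise bound by C * (b - t)^(-1/2)
    set C : ℝ := (s * Real.sqrt b)⁻¹ * (ε^2)⁻¹ with hC
    have hbound : ∀ t ∈ Set.Ioo ε b, g t ≤ C * (b - t) ^ (-(1/2) : ℝ) := by
      intro t ht
      have ht0 : 0 < t := hε.trans ht.1
      have hbt : 0 < b - t := sub_pos.mpr ht.2
      have hueq : (A/t)^2 - s^2 = (s/t)^2 * (b^2 - t^2) := by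
        rw [hA']; field_simp
      have hb2t2 : 0 < b^2 - t^2 := by nlinarith [ht.2, ht0]
      have hu : 0 < (A/t)^2 - s^2 := by rw [hueq]; positivity
      have h1 : ((A/t)^2 - s^2) ^ (-(1/2) : ℝ) = (Real.sqrt ((A/t)^2 - s^2))⁻¹ := by
        rw [show (-(1/2) : ℝ) = -(1/2) from rfl, Real.rpow_neg hu.le, ← Real.sqrt_eq_rpow]
      have h2 : Real.sqrt ((A/t)^2 - s^2) = (s/t) * Real.sqrt (b^2 - t^2) := by
        rw [hueq, Real.sqrt_mul (by positivity), Real.sqrt_sq (by positivity)]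
      have h3 : Real.sqrt (b - t) * Real.sqrt b ≤ Real.sqrt (b^2 - t^2) := by
        rw [← Real.sqrt_mul hbt.le]
        apply Real.sqrt_le_sqrt
        nlinarith [ht0.le, ht.2]
      have h4 : (b - t) ^ (-(1/2) : ℝ) = (Real.sqrt (b - t))⁻¹ := by
        rw [Real.rpow_neg hbt.le, ← Real.sqrt_eq_rpow]
      rw [hg]
      simp only
      rw [h1, h2, h4]
      have hsbt : 0 < Real.sqrt (b - t) := Real.sqrt_pos.mpr hbt
      have hsb : 0 < Real.sqrt b := Real.sqrt_pos.mpr hb0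
      have hsb2 : 0 < Real.sqrt (b^2 - t^2) := Real.sqrt_pos.mpr hb2t2
      rw [hC]
      have key : ((s/t) * Real.sqrt (b^2 - t^2))⁻¹ ≤ (s/t)⁻¹ * (Real.sqrt (b - t) * Real.sqrt b)⁻¹ := by
        rw [mul_inv]
        apply mul_le_mul_of_nonneg_left _ (by positivity)
        exact inv_anti₀ (by positivity) h3
      calc (t^3)⁻¹ * ((s/t) * Real.sqrt (b^2 - t^2))⁻¹
          ≤ (t^3)⁻¹ * ((s/t)⁻¹ * (Real.sqrt (b - t) * Real.sqrt b)⁻¹) := by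
            apply mul_le_mul_of_nonneg_left key (by positivity)
        _ = (t^2)⁻¹ * (s * Real.sqrt b)⁻¹ * (Real.sqrt (b - t))⁻¹ := by
            field_simp
        _ ≤ (ε^2)⁻¹ * (s * Real.sqrt b)⁻¹ * (Real.sqrt (b - t))⁻¹ := by
            have : (t^2)⁻¹ ≤ (ε^2)⁻¹ := by
              apply inv_anti₀ (by positivity)
              nlinarith [ht.1]
            apply mul_le_mul_of_nonneg_right _ (by positivity)
            exact mul_le_mul_of_nonneg_right this (by positivity)
        _ = (s * Real.sqrt b)⁻¹ * (ε^2)⁻¹ * (Real.sqrt (b - t))⁻¹ := by ring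
    -- integrability of the bound
    have hGint : IntegrableOn (fun t => C * (b - t) ^ (-(1/2) : ℝ)) (Set.Ioo ε b) := by
      have h0 : IntervalIntegrable (fun x : ℝ => x ^ (-(1/2) : ℝ)) volume 0 (b - ε) :=
        intervalIntegral.intervalIntegrable_rpow' (by norm_num)
      have h1 := (h0.comp_sub_left b).const_mul C
      have h2 : b - (b - ε) = ε := by ring
      have h3 : b - 0 = b := by ring
      rw [h2, h3] at h1
      exact ((intervalIntegrable_iff_integrableOn_Ioo_of_le hb.le).mp h1.symm)
    have hgm : Measurable g := by rw [hg]; fun_prop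
    have hgint : IntegrableOn g (Set.Ioo ε b) := by
      apply Integrable.mono' hGint (hgm.aestronglyMeasurable.restrict)
      rw [ae_restrict_iff' measurableSet_Ioo]
      filter_upwards with t ht
      rw [Real.norm_of_nonneg (hgnn t ht)]
      exact hbound t ht
    -- FTC
    set f : ℝ → ℝ := fun t => -(A^2)⁻¹ * Real.sqrt ((A/t)^2 - s^2) with hf
    have hcont : ContinuousOn f (Set.Icc ε b) := by
      apply ContinuousOn.mul continuousOn_const
      apply Real.continuous_sqrt.comp_continuousOn
      apply ContinuousOn.sub _ continuousOn_const
      apply ContinuousOn.pow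
      exact continuousOn_const.div continuousOn_id (fun t ht => (hε.trans_le ht.1).ne')
    have hderiv : ∀ t ∈ Set.Ioo ε b, HasDerivAt f (g t) t := fun t ht =>
      aux_deriv A s hA hs (hε.trans ht.1) ht.2
    have hii : IntervalIntegrable g volume ε b := by
      rw [intervalIntegrable_iff_integrableOn_Ioo_of_le hb.le]
      exact hgint
    have hftc := intervalIntegral.integral_eq_sub_of_hasDerivAt_of_le hb.le hcont hderiv hii
    have hfb : f b = 0 := by
      rw [hf]
      simp only
      rw [hbdef, div_div_cancel₀ hA.ne']
      simp
    have hval : ∫ t in Set.Ioo ε b, g t = (A^2)⁻¹ * Real.sqrt ((A/ε)^2 - s^2) := by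
      rw [setIntegral_congr_set Ioo_ae_eq_Ioc, ← intervalIntegral.integral_of_le hb.le, hftc, hfb]
      rw [hf]; simp only; ring
    calc (∫⁻ t in Set.Ioo ε b, ENNReal.ofReal (g t))
        = ENNReal.ofReal (∫ t in Set.Ioo ε b, g t) := by
          rw [ofReal_integral_eq_lintegral_ofReal hgint]
          exact (ae_restrict_iff' measurableSet_Ioo).mpr (Filter.Eventually.of_forall hgnn)
      _ ≤ ENNReal.ofReal ((A * ε)⁻¹) := by
          apply ENNReal.ofReal_le_ofReal
          rw [hval]
          have h1 : Real.sqrt ((A/ε)^2 - s^2) ≤ A / ε := by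
            calc Real.sqrt ((A/ε)^2 - s^2) ≤ Real.sqrt ((A/ε)^2) :=
                  Real.sqrt_le_sqrt (by nlinarith [sq_nonneg s])
              _ = A / ε := Real.sqrt_sq (by positivity)
          calc (A^2)⁻¹ * Real.sqrt ((A/ε)^2 - s^2) ≤ (A^2)⁻¹ * (A / ε) :=
                mul_le_mul_of_nonneg_left h1 (by positivity)
            _ = (A * ε)⁻¹ := by field_simp
  · have : Set.Ioo ε (A/s) = ∅ := Set.Ioo_eq_empty hb
    rw [this]
    simp

/-- Lemma `lem:260119-81`(2) for `k = 1`: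
`∫_ε^∞ [c_{1,n} (|x|/t)^{2-n} ∫₀^{|x|/t} s^{n-2}|w(s)| ((|x|/t)²-s²)^{-1/2} ds] t^{-(n+1)} dt
  ≤ c_{1,n} I₀ ε^{-1} |x|^{1-n}`. -/
theorem stmt_7 (n : ℕ) (hn : 2 ≤ n) (w : ℝ → ℝ) (hw : Measurable w)
    (hI : IntegrableOn (fun s => s ^ ((n : ℝ) - 2) * |w s|) (Set.Ioi 0))
    (ε : ℝ) (hε : 0 < ε) (x : EuclideanSpace ℝ (Fin n)) (hx : x ≠ 0) :
    (∫⁻ t in Set.Ioi ε,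
        ENNReal.ofReal (radonConst 1 n * (‖x‖ / t) ^ ((2 : ℝ) - n) *
          (∫ s in Set.Ioo 0 (‖x‖ / t),
            s ^ ((n : ℝ) - 2) * |w s| * ((‖x‖ / t) ^ 2 - s ^ 2) ^ (-(1 / 2) : ℝ)) *
          t ^ (-(n : ℝ) - 1)))
      ≤ ENNReal.ofReal
          (radonConst 1 n * (∫ s in Set.Ioi 0, s ^ ((n : ℝ) - 2) * |w s|) *
            ε⁻¹ * ‖x‖ ^ ((1 : ℝ) - n)) := by
  
  set A : ℝ := ‖x‖ with hAdef
  have hA : 0 < A := by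
    rw [hAdef]; exact norm_pos_iff.mpr hx
  set c : ℝ := radonConst 1 n with hcdef
  have hc : 0 ≤ c := radonConst_nonneg 1 n
  set F : ℝ → ℝ → ℝ≥0∞ := fun t s =>
    ENNReal.ofReal ((c * (A/t) ^ ((2:ℝ) - n) * t ^ (-(n:ℝ) - 1)) *
      (s ^ ((n:ℝ) - 2) * |w s| * ((A/t) ^ 2 - s ^ 2) ^ (-(1/2) : ℝ))) with hF
  -- Step 1: bound LHS by the double lintegral
  have step1 : (∫⁻ t in Set.Ioi ε,
        ENNReal.ofReal (c * (A / t) ^ ((2 : ℝ) - n) *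
          (∫ s in Set.Ioo 0 (A / t),
            s ^ ((n : ℝ) - 2) * |w s| * ((A / t) ^ 2 - s ^ 2) ^ (-(1 / 2) : ℝ)) *
          t ^ (-(n : ℝ) - 1)))
      ≤ ∫⁻ t in Set.Ioi ε, ∫⁻ s in Set.Ioo 0 (A/t), F t s := by
    apply lintegral_mono_ae
    rw [ae_restrict_iff' measurableSet_Ioi]
    filter_upwards with t ht
    have ht0 : 0 < t := hε.trans ht
    have hK : 0 ≤ c * (A/t) ^ ((2:ℝ) - n) * t ^ (-(n:ℝ) - 1) :=
      mul_nonneg (mul_nonneg hc (Real.rpow_nonneg (div_nonneg hA.le ht0.le) _))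
        (Real.rpow_nonneg ht0.le _)
    have hre : c * (A / t) ^ ((2 : ℝ) - n) *
          (∫ s in Set.Ioo 0 (A / t),
            s ^ ((n : ℝ) - 2) * |w s| * ((A / t) ^ 2 - s ^ 2) ^ (-(1 / 2) : ℝ)) *
          t ^ (-(n : ℝ) - 1)
        = (c * (A/t) ^ ((2:ℝ) - n) * t ^ (-(n:ℝ) - 1)) *
          (∫ s in Set.Ioo 0 (A / t),
            s ^ ((n : ℝ) - 2) * |w s| * ((A / t) ^ 2 - s ^ 2) ^ (-(1 / 2) : ℝ)) := by
      ring
    rw [hre, ENNReal.ofReal_mul hK]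
    by_cases hint : IntegrableOn
        (fun s => s ^ ((n : ℝ) - 2) * |w s| * ((A / t) ^ 2 - s ^ 2) ^ (-(1 / 2) : ℝ))
        (Set.Ioo 0 (A/t))
    · have hnn : 0 ≤ᵐ[volume.restrict (Set.Ioo 0 (A/t))]
          (fun s => s ^ ((n : ℝ) - 2) * |w s| * ((A / t) ^ 2 - s ^ 2) ^ (-(1 / 2) : ℝ)) := by
        rw [Filter.EventuallyLE, ae_restrict_iff' measurableSet_Ioo]
        filter_upwards with s hs
        have hu : (0:ℝ) < (A/t)^2 - s^2 := by
          have := hs.1; have := hs.2; nlinarith [hs.1, hs.2]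
        have h1 : (0:ℝ) ≤ s ^ ((n:ℝ) - 2) := Real.rpow_nonneg hs.1.le _
        have h2 : (0:ℝ) ≤ ((A/t)^2 - s^2) ^ (-(1/2) : ℝ) := Real.rpow_nonneg hu.le _
        positivity
      rw [ofReal_integral_eq_lintegral_ofReal hint hnn,
        ← lintegral_const_mul' _ _ ENNReal.ofReal_ne_top]
      refine le_of_eq (lintegral_congr fun s => ?_)
      rw [hF, ← ENNReal.ofReal_mul hK]
    · rw [integral_undef hint]
      simp only [ENNReal.ofReal_zero, mul_zero]
      exact zero_le
  -- the set S and the indicator function G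
  set S : Set (ℝ × ℝ) := {p | 0 < p.2 ∧ p.2 * p.1 < A} with hS
  have hSm : MeasurableSet S := by
    apply MeasurableSet.inter
    · exact measurableSet_lt measurable_const measurable_snd
    · exact measurableSet_lt (measurable_snd.mul measurable_fst) measurable_const
  set G : ℝ → ℝ → ℝ≥0∞ := fun t s => S.indicator (fun p => F p.1 p.2) (t, s) with hG
  have hFm : Measurable (fun p : ℝ × ℝ => F p.1 p.2) := by
    rw [hF]
    apply ENNReal.measurable_ofReal.comp
    fun_prop
  -- Step 2: rewrite with indicators and swap
  have step2 : (∫⁻ t in Set.Ioi ε, ∫⁻ s in Set.Ioo 0 (A/t), F t s)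
      = ∫⁻ s, ∫⁻ t in Set.Ioi ε, G t s := by
    have e1 : (∫⁻ t in Set.Ioi ε, ∫⁻ s in Set.Ioo 0 (A/t), F t s)
        = ∫⁻ t in Set.Ioi ε, ∫⁻ s, G t s := by
      apply lintegral_congr_ae
      rw [Filter.EventuallyEq, ae_restrict_iff' measurableSet_Ioi]
      filter_upwards with t ht
      have ht0 : 0 < t := hε.trans ht
      have hsec : Set.Ioo 0 (A/t) = Prod.mk t ⁻¹' S := by
        ext s
        simp only [Set.mem_Ioo, Set.mem_preimage, hS, Set.mem_setOf_eq]
        constructor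
        · rintro ⟨h1, h2⟩
          exact ⟨h1, (lt_div_iff₀ ht0).mp h2⟩
        · rintro ⟨h1, h2⟩
          exact ⟨h1, (lt_div_iff₀ ht0).mpr h2⟩
      rw [hsec, ← lintegral_indicator (hSm.preimage measurable_prodMk_left)]
      refine lintegral_congr fun s => rfl
    rw [e1]
    apply lintegral_lintegral_swap
    have : Function.uncurry G = S.indicator (fun p => F p.1 p.2) := by
      funext p; exact rfl
    rw [this]
    exact (hFm.indicator hSm).aemeasurable
  -- Step 3: bound the inner integral for each s
  have step3 : ∀ s : ℝ, (∫⁻ t in Set.Ioi ε, G t s)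
      ≤ (Set.Ioi (0:ℝ)).indicator (fun s =>
          ENNReal.ofReal (s ^ ((n:ℝ) - 2) * |w s|) *
            ENNReal.ofReal (c * A ^ ((1:ℝ) - n) * ε⁻¹)) s := by
    intro s
    by_cases hs : 0 < s
    · rw [Set.indicator_of_mem (Set.mem_Ioi.mpr hs)]
      have hGsec : ∀ t : ℝ, G t s = (Set.Iio (A/s)).indicator (fun t => F t s) t := by
        intro t
        simp only [hG, Set.indicator_apply, Set.mem_setOf_eq, Set.mem_Iio, hS]
        congr 1
        simp only [eq_iff_iff]
        constructor
        · rintro ⟨h1, h2⟩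
          rw [lt_div_iff₀ hs]; linarith [h2, mul_comm s t]
        · intro h
          exact ⟨hs, by rw [mul_comm]; exact (lt_div_iff₀ hs).mp h⟩
      calc (∫⁻ t in Set.Ioi ε, G t s)
          = ∫⁻ t in Set.Ioo ε (A/s), F t s := by
            rw [lintegral_congr fun t => hGsec t, lintegral_indicator measurableSet_Iio,
              Measure.restrict_restrict measurableSet_Iio, Set.Iio_inter_Ioi]
        _ = ∫⁻ t in Set.Ioo ε (A/s),
              ENNReal.ofReal (c * A ^ ((2:ℝ) - n) * (s ^ ((n:ℝ) - 2) * |w s|)) *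
                ENNReal.ofReal ((t^3)⁻¹ * ((A/t)^2 - s^2) ^ (-(1/2) : ℝ)) := by
            apply setLIntegral_congr_fun measurableSet_Ioo
            intro t ht
            have ht0 : 0 < t := hε.trans ht.1
            have e1 : (A/t) ^ ((2:ℝ) - n) * t ^ (-(n:ℝ) - 1) = A ^ ((2:ℝ) - n) * (t^3)⁻¹ := by
              have e2 : -( (2:ℝ) - n) + (-(n:ℝ) - 1) = -3 := by ring
              rw [Real.div_rpow hA.le ht0.le, div_eq_mul_inv, ← Real.rpow_neg ht0.le,
                mul_assoc, ← Real.rpow_add ht0, e2, Real.rpow_neg ht0.le,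
                show ((3:ℝ)) = ((3:ℕ):ℝ) by norm_num, Real.rpow_natCast]
            simp only [hF]
            rw [← ENNReal.ofReal_mul (by positivity)]
            congr 1
            calc (c * (A/t) ^ ((2:ℝ) - n) * t ^ (-(n:ℝ) - 1)) *
                  (s ^ ((n:ℝ) - 2) * |w s| * ((A/t) ^ 2 - s ^ 2) ^ (-(1/2) : ℝ))
                = (c * ((A/t) ^ ((2:ℝ) - n) * t ^ (-(n:ℝ) - 1))) *
                  (s ^ ((n:ℝ) - 2) * |w s| * ((A/t) ^ 2 - s ^ 2) ^ (-(1/2) : ℝ)) := by ring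
              _ = _ := by rw [e1]; ring
        _ = ENNReal.ofReal (c * A ^ ((2:ℝ) - n) * (s ^ ((n:ℝ) - 2) * |w s|)) *
              ∫⁻ t in Set.Ioo ε (A/s),
                ENNReal.ofReal ((t^3)⁻¹ * ((A/t)^2 - s^2) ^ (-(1/2) : ℝ)) := by
            rw [lintegral_const_mul' _ _ ENNReal.ofReal_ne_top]
        _ ≤ ENNReal.ofReal (c * A ^ ((2:ℝ) - n) * (s ^ ((n:ℝ) - 2) * |w s|)) *
              ENNReal.ofReal ((A * ε)⁻¹) :=
            mul_le_mul_right (aux_tint A s ε hA hs hε) _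
        _ = ENNReal.ofReal (s ^ ((n:ℝ) - 2) * |w s|) *
              ENNReal.ofReal (c * A ^ ((1:ℝ) - n) * ε⁻¹) := by
            rw [← ENNReal.ofReal_mul (by positivity : (0:ℝ) ≤ c * A ^ ((2:ℝ) - n) * (s ^ ((n:ℝ) - 2) * |w s|)),
              ← ENNReal.ofReal_mul (mul_nonneg (Real.rpow_nonneg hs.le _) (abs_nonneg _))]
            congr 1
            have e3 : A ^ ((2:ℝ) - n) * A⁻¹ = A ^ ((1:ℝ) - n) := by
              rw [← Real.rpow_neg_one A, ← Real.rpow_add hA]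
              congr 1; ring
            rw [mul_inv]
            calc c * A ^ ((2:ℝ) - n) * (s ^ ((n:ℝ) - 2) * |w s|) * (A⁻¹ * ε⁻¹)
                = s ^ ((n:ℝ) - 2) * |w s| * (c * (A ^ ((2:ℝ) - n) * A⁻¹) * ε⁻¹) := by ring
              _ = _ := by rw [e3]
    · have hzero : ∀ t : ℝ, G t s = 0 := by
        intro t
        apply Set.indicator_of_notMem
        simp only [hS, Set.mem_setOf_eq, not_and]
        intro h; exact absurd h hs
      simp only [hzero]
      simp
  -- Step 4: conclude
  calc (∫⁻ t in Set.Ioi ε,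
        ENNReal.ofReal (c * (A / t) ^ ((2 : ℝ) - n) *
          (∫ s in Set.Ioo 0 (A / t),
            s ^ ((n : ℝ) - 2) * |w s| * ((A / t) ^ 2 - s ^ 2) ^ (-(1 / 2) : ℝ)) *
          t ^ (-(n : ℝ) - 1)))
      ≤ ∫⁻ s, ∫⁻ t in Set.Ioi ε, G t s := step2 ▸ step1
    _ ≤ ∫⁻ s, (Set.Ioi (0:ℝ)).indicator (fun s =>
          ENNReal.ofReal (s ^ ((n:ℝ) - 2) * |w s|) *
            ENNReal.ofReal (c * A ^ ((1:ℝ) - n) * ε⁻¹)) s := lintegral_mono step3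
    _ = (∫⁻ s in Set.Ioi 0, ENNReal.ofReal (s ^ ((n:ℝ) - 2) * |w s|)) *
          ENNReal.ofReal (c * A ^ ((1:ℝ) - n) * ε⁻¹) := by
        rw [lintegral_indicator measurableSet_Ioi,
          lintegral_mul_const' _ _ ENNReal.ofReal_ne_top]
    _ = ENNReal.ofReal (∫ s in Set.Ioi 0, s ^ ((n:ℝ) - 2) * |w s|) *
          ENNReal.ofReal (c * A ^ ((1:ℝ) - n) * ε⁻¹) := by
        congr 1
        rw [ofReal_integral_eq_lintegral_ofReal hI]
        rw [Filter.EventuallyLE, ae_restrict_iff' measurableSet_Ioi]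
        filter_upwards with s hs
        exact mul_nonneg (Real.rpow_nonneg (le_of_lt hs) _) (abs_nonneg _)
    _ ≤ ENNReal.ofReal (c * (∫ s in Set.Ioi 0, s ^ ((n:ℝ) - 2) * |w s|) * ε⁻¹ * A ^ ((1:ℝ) - n)) := by
        rw [mul_comm, ← ENNReal.ofReal_mul (by positivity)]
        apply ENNReal.ofReal_le_ofReal
        apply le_of_eq
        ring
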